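/- For partitions λ = (λ₁,…,λ_m) and μ = (μ₁,…,μ_n) with Durfee sizes u = u_λ and v = u_μ, the exchange-number satisfies N(−λ, μ) = u·v + N(−λ_m,…,−λ_{u+1}, μ₁−u,…,μ_v−u) + N(−λ_u+v,…,−λ₁+v, μ_{v+1},…,μ_n). -/

import Mathlib

/-!  STATEMENT 16 (decomposition step of Lemma 3.2).  For partitions λ (m parts)
and μ (n parts) with Durfee sizes `u = u_λ`, `v = u_μ`,
`N(−λ, μ) = u·v + N(−λ_m,…,−λ_{u+1}, μ₁−u,…,μ_v−u)
          + N(−λ_u+v,…,−λ₁+v, μ_{v+1},…,μ_n)`,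
where `−λ = (−λ_m,…,−λ₁)`. -/

/-- The exchange number `N(δ)` of a weight: the number of pairs `i < j` with
`δ i - i < δ j - j` (the length of the permutation sorting `δ` into a
non-increasing weight under the exchange action `σᵢ·δ = (…, δ_{i+1}−1, δ_i+1, …)`). -/
def exchNum {n : ℕ} (δ : Fin n → ℤ) : ℕ :=
  (Finset.univ.filter (fun p : Fin n × Fin n =>
    p.1 < p.2 ∧ δ p.1 - (p.1 : ℤ) < δ p.2 - (p.2 : ℤ))).card

/-- `N(δ) ≠ -∞`: some permutation makes `δ` non-increasing under the exchange
action; equivalently the shifted sequence `i ↦ δ i - i` is injective. -/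
def Sortable {n : ℕ} (δ : Fin n → ℤ) : Prop :=
  Function.Injective (fun i : Fin n => δ i - (i : ℤ))

/-- The Durfee square size of a partition `λ` (a non-increasing sequence of
naturals): the number of indices `i` (0-indexed) with `λ_i ≥ i+1`, i.e. the
largest `u` with `λ_u ≥ u` (1-indexed). -/
def durfee {n : ℕ} (lam : Fin n → ℕ) : ℕ :=
  (Finset.univ.filter (fun i : Fin n => (i : ℕ) + 1 ≤ lam i)).card

/-- `|λ⁺|`: the number of boxes to the right of the Durfee square,
`∑_{i < u_λ} (λ_i − u_λ)`. -/
def plusSum {n : ℕ} (lam : Fin n → ℕ) : ℕ :=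
  ∑ i ∈ Finset.univ.filter (fun i : Fin n => (i : ℕ) + 1 ≤ lam i), (lam i - durfee lam)

/-- Extension of a finite sequence by zeros. -/
def extSeq {m : ℕ} (lam : Fin m → ℕ) : ℕ → ℕ :=
  fun i => if h : i < m then lam ⟨i, h⟩ else 0

lemma exchNum_append {p q : ℕ} (f : Fin p → ℤ) (g : Fin q → ℤ)
    (hf : Antitone f) (hg : Antitone g) :
    exchNum (Fin.append f g) =
      (Finset.univ.filter (fun x : Fin p × Fin q =>
        f x.1 - (x.1 : ℤ) < g x.2 - ((p : ℤ) + (x.2 : ℤ)))).card := by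
  rw [exchNum]
  refine (Finset.card_bij
    (fun (a : Fin p × Fin q) _ => (Fin.castAdd q a.1, Fin.natAdd p a.2)) ?_ ?_ ?_).symm
  · intro a ha
    simp only [Finset.mem_filter, Finset.mem_univ, true_and] at ha ⊢
    refine ⟨by simp [Fin.lt_def]; omega, ?_⟩
    rw [Fin.append_left, Fin.append_right]
    simpa using ha
  · intro a _ b _ h
    have h1 := congrArg (fun x => (x.1 : ℕ)) h
    have h2 := congrArg (fun x => (x.2 : ℕ)) h
    simp only [Fin.coe_castAdd, Fin.coe_natAdd] at h1 h2
    exact Prod.ext (Fin.ext h1) (Fin.ext (by omega))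
  · intro b hb
    simp only [Finset.mem_filter, Finset.mem_univ, true_and] at hb
    obtain ⟨hlt, hshift⟩ := hb
    have hltv : (b.1 : ℕ) < (b.2 : ℕ) := hlt
    have hc : ((b.1 : ℕ) : ℤ) < ((b.2 : ℕ) : ℤ) := by exact_mod_cast hltv
    have h1 : (b.1 : ℕ) < p := by
      by_contra h
      push_neg at h
      have h2 : p ≤ (b.2 : ℕ) := le_trans h (le_of_lt hltv)
      have hq1 : (b.1 : ℕ) - p < q := by have := b.1.isLt; omega
      have hq2 : (b.2 : ℕ) - p < q := by have := b.2.isLt; omega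
      have v1 : Fin.append f g b.1 = g ⟨(b.1 : ℕ) - p, hq1⟩ := by
        conv_lhs => rw [show b.1 = Fin.natAdd p ⟨(b.1 : ℕ) - p, hq1⟩ from
          Fin.ext (by simp; omega)]
        exact Fin.append_right f g _
      have v2 : Fin.append f g b.2 = g ⟨(b.2 : ℕ) - p, hq2⟩ := by
        conv_lhs => rw [show b.2 = Fin.natAdd p ⟨(b.2 : ℕ) - p, hq2⟩ from
          Fin.ext (by simp; omega)]
        exact Fin.append_right f g _
      have hg' : g ⟨(b.2 : ℕ) - p, hq2⟩ ≤ g ⟨(b.1 : ℕ) - p, hq1⟩ :=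
        hg (by simp [Fin.le_def]; omega)
      omega
    have h2 : p ≤ (b.2 : ℕ) := by
      by_contra h
      push_neg at h
      have v1 : Fin.append f g b.1 = f ⟨(b.1 : ℕ), h1⟩ := by
        conv_lhs => rw [show b.1 = Fin.castAdd q ⟨(b.1 : ℕ), h1⟩ from Fin.ext (by simp)]
        exact Fin.append_left f g _
      have v2 : Fin.append f g b.2 = f ⟨(b.2 : ℕ), h⟩ := by
        conv_lhs => rw [show b.2 = Fin.castAdd q ⟨(b.2 : ℕ), h⟩ from Fin.ext (by simp)]
        exact Fin.append_left f g _
      have hf' : f ⟨(b.2 : ℕ), h⟩ ≤ f ⟨(b.1 : ℕ), h1⟩ :=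
        hf (Fin.mk_le_mk.mpr (le_of_lt hltv))
      omega
    have hq2 : (b.2 : ℕ) - p < q := by have := b.2.isLt; omega
    refine ⟨(⟨(b.1 : ℕ), h1⟩, ⟨(b.2 : ℕ) - p, hq2⟩), ?_, ?_⟩
    · simp only [Finset.mem_filter, Finset.mem_univ, true_and]
      have v1 : Fin.append f g b.1 = f ⟨(b.1 : ℕ), h1⟩ := by
        conv_lhs => rw [show b.1 = Fin.castAdd q ⟨(b.1 : ℕ), h1⟩ from Fin.ext (by simp)]
        exact Fin.append_left f g _
      have v2 : Fin.append f g b.2 = g ⟨(b.2 : ℕ) - p, hq2⟩ := by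
        conv_lhs => rw [show b.2 = Fin.natAdd p ⟨(b.2 : ℕ) - p, hq2⟩ from
          Fin.ext (by simp; omega)]
        exact Fin.append_right f g _
      simp only [v1, v2] at hshift
      omega
    · refine Prod.ext (Fin.ext ?_) (Fin.ext ?_) <;> simp <;> omega

lemma card_filter_lt {m : ℕ} (u : ℕ) (h : u ≤ m) :
    (Finset.univ.filter fun a : Fin m => (a : ℕ) < u).card = u := by
  refine (Finset.card_nbij (s := Finset.univ.filter fun a : Fin m => (a : ℕ) < u) (t := Finset.range u) (fun a => (a : ℕ)) ?_ ?_ ?_).trans (Finset.card_range u)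
  · intro a ha
    simp only [Finset.coe_filter, Finset.mem_univ, true_and, Set.mem_setOf_eq] at ha
    simpa using ha
  · intro a _ b _ hab
    exact Fin.ext hab
  · intro b hb
    simp only [Finset.coe_range, Set.mem_Iio] at hb
    exact ⟨⟨b, lt_of_lt_of_le hb h⟩, by simpa using hb, rfl⟩


lemma durfee_le {m : ℕ} (lam : Fin m → ℕ) : durfee lam ≤ m :=
  le_trans (Finset.card_filter_le _ _) (by simp)

lemma lt_durfee_iff {m : ℕ} (lam : Fin m → ℕ) (hlam : Antitone lam) (a : Fin m) :
    (a : ℕ) < durfee lam ↔ (a : ℕ) + 1 ≤ lam a := by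
  constructor
  · intro hd
    by_contra hc
    push_neg at hc
    have hsub : (Finset.univ.filter (fun i : Fin m => (i : ℕ) + 1 ≤ lam i)) ⊆
        Finset.univ.filter (fun b : Fin m => (b : ℕ) < (a : ℕ)) := by
      intro b hb
      simp only [Finset.mem_filter, Finset.mem_univ, true_and] at hb ⊢
      by_contra hba
      push_neg at hba
      have := hlam (show a ≤ b from hba)
      omega
    have := Finset.card_le_card hsub
    rw [card_filter_lt (a : ℕ) (le_of_lt a.isLt)] at this
    rw [durfee] at hd
    omega
  · intro h1
    have hsub : (Finset.univ.filter (fun b : Fin m => (b : ℕ) < (a : ℕ) + 1)) ⊆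
        Finset.univ.filter (fun i : Fin m => (i : ℕ) + 1 ≤ lam i) := by
      intro b hb
      simp only [Finset.mem_filter, Finset.mem_univ, true_and] at hb ⊢
      have := hlam (show b ≤ a from by omega)
      omega
    have := Finset.card_le_card hsub
    rw [card_filter_lt ((a : ℕ) + 1) a.isLt] at this
    rw [durfee]
    omega

lemma extSeq_anti {m : ℕ} (lam : Fin m → ℕ) (hlam : Antitone lam) :
    Antitone (fun i => (extSeq lam i : ℤ)) := by
  intro i j hij
  simp only [extSeq, Nat.cast_le]
  split_ifs with h1 h2 h2
  · exact hlam (by exact hij)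
  · omega
  · exact Nat.zero_le _
  · exact le_refl _

lemma extSeq_eq {m : ℕ} (lam : Fin m → ℕ) {i : ℕ} (h : i < m) :
    extSeq lam i = lam ⟨i, h⟩ := dif_pos h

abbrev crossP {m n : ℕ} (lam : Fin m → ℕ) (mu : Fin n → ℕ) (y : Fin m × Fin n) : Prop :=
  ((y.1 : ℕ) : ℤ) + ((y.2 : ℕ) : ℤ) + 2 ≤ (lam y.1 : ℤ) + (mu y.2 : ℤ)

theorem stmt_16 {m n : ℕ} (lam : Fin m → ℕ) (mu : Fin n → ℕ)
    (hlam : Antitone lam) (hmu : Antitone mu)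
    (δ : Fin (m + n) → ℤ)
    (hδ : δ = Fin.append (fun i : Fin m => -(extSeq lam (m - 1 - (i : ℕ)) : ℤ))
      (fun j : Fin n => (mu j : ℤ)))
    (hsort : Sortable δ) :
    exchNum δ = durfee lam * durfee mu +
      exchNum (Fin.append
        (fun i : Fin (m - durfee lam) => -(extSeq lam (m - 1 - (i : ℕ)) : ℤ))
        (fun j : Fin (durfee mu) => (extSeq mu (j : ℕ) : ℤ) - (durfee lam : ℤ))) +
      exchNum (Fin.append
        (fun i : Fin (durfee lam) =>
          -(extSeq lam (durfee lam - 1 - (i : ℕ)) : ℤ) + (durfee mu : ℤ))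
        (fun j : Fin (n - durfee mu) => (extSeq mu (durfee mu + (j : ℕ)) : ℤ))) := by
  subst hδ
  have hes := extSeq_anti lam hlam
  have hesmu := extSeq_anti mu hmu
  have ha1 : Antitone (fun i : Fin m => -(extSeq lam (m - 1 - (i : ℕ)) : ℤ)) := by
    intro i j hij
    simp only [neg_le_neg_iff]
    exact hes (by omega)
  have ha2 : Antitone (fun j : Fin n => (mu j : ℤ)) := by
    intro i j hij; simp only [Nat.cast_le]; exact hmu hij
  have ha3 : Antitone (fun i : Fin (m - durfee lam) => -(extSeq lam (m - 1 - (i : ℕ)) : ℤ)) := by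
    intro i j hij
    simp only [neg_le_neg_iff]
    exact hes (by omega)
  have ha4 : Antitone (fun j : Fin (durfee mu) => (extSeq mu (j : ℕ) : ℤ) - (durfee lam : ℤ)) := by
    intro i j hij
    have := hesmu (show (i : ℕ) ≤ (j : ℕ) from hij)
    simp only at this ⊢
    omega
  have ha5 : Antitone (fun i : Fin (durfee lam) =>
      -(extSeq lam (durfee lam - 1 - (i : ℕ)) : ℤ) + (durfee mu : ℤ)) := by
    intro i j hij
    have := hes (show durfee lam - 1 - (j:ℕ) ≤ durfee lam - 1 - (i:ℕ) by omega)
    simp only at this ⊢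
    omega
  have ha6 : Antitone (fun j : Fin (n - durfee mu) => (extSeq mu (durfee mu + (j : ℕ)) : ℤ)) := by
    intro i j hij
    exact hesmu (by omega)
  rw [exchNum_append _ _ ha1 ha2, exchNum_append _ _ ha3 ha4, exchNum_append _ _ ha5 ha6]
  have ule : durfee lam ≤ m := durfee_le lam
  have vle : durfee mu ≤ n := durfee_le mu
  have hlam' : ∀ a : Fin m, (a : ℕ) < durfee lam ↔ (a : ℕ) + 1 ≤ lam a :=
    lt_durfee_iff lam hlam
  have hmu' : ∀ a : Fin n, (a : ℕ) < durfee mu ↔ (a : ℕ) + 1 ≤ mu a :=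
    lt_durfee_iff mu hmu
  have h0 : (Finset.univ.filter (fun x : Fin m × Fin n =>
        -(extSeq lam (m - 1 - (x.1 : ℕ)) : ℤ) - (x.1 : ℤ) <
          (mu x.2 : ℤ) - ((m : ℤ) + (x.2 : ℤ)))).card =
      (Finset.univ.filter (crossP lam mu)).card := by
    apply Finset.card_nbij
      (fun x => ((⟨m - 1 - (x.1 : ℕ), by have := x.1.isLt; omega⟩ : Fin m), x.2))
    · intro a ha
      simp only [Finset.mem_coe, Finset.mem_filter, Finset.mem_univ, true_and] at ha ⊢
      rw [extSeq_eq lam (show m - 1 - (a.1 : ℕ) < m by have := a.1.isLt; omega)] at ha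
      simp only [crossP]
      have := a.1.isLt
      omega
    · intro a _ b _ hab
      have e1 := congrArg (fun y => (y.1 : ℕ)) hab
      have e2 := congrArg (fun y => (y.2 : ℕ)) hab
      simp only at e1 e2
      have := a.1.isLt; have := b.1.isLt
      exact Prod.ext (Fin.ext (by omega)) (Fin.ext e2)
    · intro y hy
      simp only [Finset.coe_filter, Finset.mem_univ, true_and, Set.mem_setOf_eq,
        Set.mem_image, Finset.mem_coe, Finset.mem_filter, crossP] at hy ⊢
      have hy1 := y.1.isLt
      refine ⟨((⟨m - 1 - (y.1 : ℕ), by omega⟩ : Fin m), y.2), ?_, ?_⟩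
      · dsimp only
        rw [show m - 1 - (m - 1 - (y.1 : ℕ)) = (y.1 : ℕ) from by omega,
          extSeq_eq lam y.1.isLt, Fin.eta]
        omega
      · refine Prod.ext (Fin.ext ?_) rfl
        dsimp only
        omega
  have h1 : (Finset.univ.filter (fun x : Fin (m - durfee lam) × Fin (durfee mu) =>
        -(extSeq lam (m - 1 - (x.1 : ℕ)) : ℤ) - (x.1 : ℤ) <
          ((extSeq mu (x.2 : ℕ) : ℤ) - (durfee lam : ℤ)) -
            (((m - durfee lam : ℕ) : ℤ) + (x.2 : ℤ)))).card =
      (Finset.univ.filter (fun y : Fin m × Fin n =>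
        crossP lam mu y ∧ durfee lam ≤ (y.1 : ℕ) ∧ (y.2 : ℕ) < durfee mu)).card := by
    apply Finset.card_nbij (fun x =>
      ((⟨m - 1 - (x.1 : ℕ), by have := x.1.isLt; omega⟩ : Fin m),
       (⟨(x.2 : ℕ), by have := x.2.isLt; omega⟩ : Fin n)))
    · intro a ha
      simp only [Finset.mem_coe, Finset.mem_filter, Finset.mem_univ, true_and, crossP] at ha ⊢
      rw [extSeq_eq lam (show m - 1 - (a.1 : ℕ) < m by have := a.1.isLt; omega)] at ha
      rw [extSeq_eq mu (show (a.2 : ℕ) < n by have := a.2.isLt; omega)] at ha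
      have := a.1.isLt; have := a.2.isLt
      refine ⟨?_, by omega, by omega⟩
      omega
    · intro a _ b _ hab
      have e1 := congrArg (fun y => (y.1 : ℕ)) hab
      have e2 := congrArg (fun y => (y.2 : ℕ)) hab
      simp only at e1 e2
      have := a.1.isLt; have := b.1.isLt
      exact Prod.ext (Fin.ext (by omega)) (Fin.ext (by omega))
    · intro y hy
      simp only [Finset.coe_filter, Finset.mem_univ, true_and, Set.mem_setOf_eq,
        Set.mem_image, Finset.mem_coe, Finset.mem_filter, crossP] at hy ⊢
      obtain ⟨hp, hA, hB⟩ := hy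
      have hy1 := y.1.isLt
      refine ⟨((⟨m - 1 - (y.1 : ℕ), by omega⟩ : Fin (m - durfee lam)),
        (⟨(y.2 : ℕ), hB⟩ : Fin (durfee mu))), ?_, ?_⟩
      · dsimp only
        rw [show m - 1 - (m - 1 - (y.1 : ℕ)) = (y.1 : ℕ) from by omega,
          extSeq_eq lam y.1.isLt, Fin.eta, extSeq_eq mu y.2.isLt, Fin.eta]
        omega
      · refine Prod.ext (Fin.ext ?_) (Fin.ext ?_) <;> dsimp only <;> omega
  have h2 : (Finset.univ.filter (fun x : Fin (durfee lam) × Fin (n - durfee mu) =>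
        (-(extSeq lam (durfee lam - 1 - (x.1 : ℕ)) : ℤ) + (durfee mu : ℤ)) - (x.1 : ℤ) <
          (extSeq mu (durfee mu + (x.2 : ℕ)) : ℤ) -
            ((durfee lam : ℤ) + (x.2 : ℤ)))).card =
      (Finset.univ.filter (fun y : Fin m × Fin n =>
        crossP lam mu y ∧ (y.1 : ℕ) < durfee lam ∧ durfee mu ≤ (y.2 : ℕ))).card := by
    apply Finset.card_nbij (fun x =>
      ((⟨durfee lam - 1 - (x.1 : ℕ), by have := x.1.isLt; omega⟩ : Fin m),
       (⟨durfee mu + (x.2 : ℕ), by have := x.2.isLt; omega⟩ : Fin n)))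
    · intro a ha
      simp only [Finset.mem_coe, Finset.mem_filter, Finset.mem_univ, true_and, crossP] at ha ⊢
      rw [extSeq_eq lam (show durfee lam - 1 - (a.1 : ℕ) < m by have := a.1.isLt; omega)] at ha
      rw [extSeq_eq mu (show durfee mu + (a.2 : ℕ) < n by have := a.2.isLt; omega)] at ha
      have := a.1.isLt; have := a.2.isLt
      refine ⟨?_, by omega, by omega⟩
      omega
    · intro a _ b _ hab
      have e1 := congrArg (fun y => (y.1 : ℕ)) hab
      have e2 := congrArg (fun y => (y.2 : ℕ)) hab
      simp only at e1 e2
      have := a.1.isLt; have := b.1.isLt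
      exact Prod.ext (Fin.ext (by omega)) (Fin.ext (by omega))
    · intro y hy
      simp only [Finset.coe_filter, Finset.mem_univ, true_and, Set.mem_setOf_eq,
        Set.mem_image, Finset.mem_coe, Finset.mem_filter, crossP] at hy ⊢
      obtain ⟨hp, hA, hB⟩ := hy
      have hy1 := y.1.isLt; have hy2 := y.2.isLt
      refine ⟨((⟨durfee lam - 1 - (y.1 : ℕ), by omega⟩ : Fin (durfee lam)),
        (⟨(y.2 : ℕ) - durfee mu, by omega⟩ : Fin (n - durfee mu))), ?_, ?_⟩
      · dsimp only
        rw [show durfee lam - 1 - (durfee lam - 1 - (y.1 : ℕ)) = (y.1 : ℕ) from by omega,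
          show durfee mu + ((y.2 : ℕ) - durfee mu) = (y.2 : ℕ) from by omega,
          extSeq_eq lam y.1.isLt, Fin.eta, extSeq_eq mu y.2.isLt, Fin.eta]
        omega
      · refine Prod.ext (Fin.ext ?_) (Fin.ext ?_) <;> dsimp only <;> omega
  rw [h0, h1, h2]
  have eqF : Finset.univ.filter (crossP lam mu) =
      (Finset.univ.filter (fun y : Fin m × Fin n =>
          (y.1 : ℕ) < durfee lam ∧ (y.2 : ℕ) < durfee mu) ∪
        Finset.univ.filter (fun y : Fin m × Fin n =>
          crossP lam mu y ∧ durfee lam ≤ (y.1 : ℕ) ∧ (y.2 : ℕ) < durfee mu)) ∪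
      Finset.univ.filter (fun y : Fin m × Fin n =>
        crossP lam mu y ∧ (y.1 : ℕ) < durfee lam ∧ durfee mu ≤ (y.2 : ℕ)) := by
    ext y
    simp only [Finset.mem_filter, Finset.mem_univ, true_and, Finset.mem_union, crossP]
    have l1 := hlam' y.1
    have l2 := hmu' y.2
    constructor
    · intro hp
      by_cases hA : (y.1 : ℕ) < durfee lam <;> by_cases hB : (y.2 : ℕ) < durfee mu
      · exact Or.inl (Or.inl ⟨hA, hB⟩)
      · exact Or.inr ⟨hp, hA, by omega⟩
      · exact Or.inl (Or.inr ⟨hp, by omega, hB⟩)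
      · exfalso; omega
    · rintro ((⟨hA, hB⟩ | ⟨hp, _⟩) | ⟨hp, _⟩)
      · omega
      · exact hp
      · exact hp
  rw [eqF]
  rw [Finset.card_union_of_disjoint, Finset.card_union_of_disjoint]
  · congr 1
    congr 1
    have : Finset.univ.filter (fun y : Fin m × Fin n =>
          (y.1 : ℕ) < durfee lam ∧ (y.2 : ℕ) < durfee mu) =
        (Finset.univ.filter fun a : Fin m => (a : ℕ) < durfee lam) ×ˢ
          (Finset.univ.filter fun b : Fin n => (b : ℕ) < durfee mu) := by
      ext y
      simp [Finset.mem_product]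
    rw [this, Finset.card_product, card_filter_lt _ ule, card_filter_lt _ vle]
  · rw [Finset.disjoint_left]
    intro y hy hy'
    simp only [Finset.mem_filter, Finset.mem_univ, true_and] at hy hy'
    omega
  · rw [Finset.disjoint_left]
    intro y hy hy'
    simp only [Finset.mem_union, Finset.mem_filter, Finset.mem_univ, true_and] at hy hy'
    omega
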